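/- Let D be a G-graded complex graded division algebra with D_e = ℂ = Z(D) (so D is a twisted group algebra of its finite support T with nondegenerate commutation bicharacter β). Then: (1) every ℂ-linear automorphism ψ_0 of D as a graded algebra has the form ψ_0(X_t) = X_t ν(t) for some ν ∈ Hom(T, ℂ^×); (2) a ℂ-antilinear graded automorphism exists only if β takes values in {±1}, and then any such automorphism has the form ψ_0(X_t) = X_t ν(t) with ν(st) = ν(s)ν(t)β(s,t) for all s,t ∈ T; (3) in either case, ψ_0 commutes with the involution φ_0 (with φ_0(X_t) = X_t, φ_0|_{D_e} = conjugation) if and only if ν takes values in ℝ^×. -/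

import Mathlib

variable {G : Type*} [CommGroup G] [DecidableEq G]
variable {D : Type*} [Ring D] [Algebra ℂ D] [Algebra ℝ D] [IsScalarTower ℝ ℂ D]

/-- A real graded division algebra. -/
def IsGDA (comp : G → Submodule ℝ D) : Prop :=
  DirectSum.IsInternal comp ∧ (1 : D) ∈ comp 1 ∧
    (∀ (g h : G) (a b : D), a ∈ comp g → b ∈ comp h → a * b ∈ comp (g * h)) ∧
    ∀ (g : G) (a : D), a ∈ comp g → a ≠ 0 → IsUnit a

/-- For a graded division algebra over `ℂ` with `D_e = ℂ = Z(D)` (a twisted group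
algebra `D = ⊕_{t∈T} ℂ X_t` with nondegenerate commutation bicharacter `β`):
(1) the `ℂ`-linear graded automorphisms are given by characters `ν ∈ Hom(T, ℂˣ)`
via `ψ₀(X_t) = X_t ν(t)`;
(2) `ℂ`-antilinear graded automorphisms exist only if `β` takes values `±1`, and
are given by `ψ₀(X_t) = X_t ν(t)` with `ν(st) = ν(s)ν(t)β(s,t)`;
(3) in either case `ψ₀` commutes with the involution `φ₀` (fixing every `X_t` and
conjugating `D_e`) if and only if `ν` takes real values. -/
theorem stmt_10 (comp : G → Submodule ℝ D) (hgda : IsGDA comp)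
    (T : Subgroup G) [Finite ↥T] (hT : ∀ g : G, comp g ≠ ⊥ ↔ g ∈ T)
    (X : ↥T → Dˣ) (hX : ∀ t : ↥T, (X t : D) ∈ comp (t : G))
    -- `D_e = ℂ·1 = Z(D)`
    (hDe : ∀ z ∈ comp (1 : G), ∃ c : ℂ, z = algebraMap ℂ D c)
    (hDe' : ∀ c : ℂ, algebraMap ℂ D c ∈ comp (1 : G))
    (β : ↥T → ↥T → ℂ)
    (hβdef : ∀ s t : ↥T,
      (X s : D) * (X t : D) = algebraMap ℂ D (β s t) * ((X t : D) * (X s : D)))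
    (hβmul₁ : ∀ s t u : ↥T, β (s * t) u = β s u * β t u)
    (hβmul₂ : ∀ s t u : ↥T, β s (t * u) = β s t * β s u)
    (hβalt : ∀ t : ↥T, β t t = 1)
    (hβnd : ∀ s : ↥T, (∀ t : ↥T, β s t = 1) → s = 1)
    (φ : D ≃ₗ[ℝ] D)
    (hanti : ∀ x y : D, φ (x * y) = φ y * φ x)
    (hinvol : ∀ x : D, φ (φ x) = x)
    (hgrφ : ∀ (g : G), ∀ x ∈ comp g, φ x ∈ comp g)
    (hφX : ∀ t : ↥T, φ (X t : D) = (X t : D))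
    (hφC : ∀ c : ℂ, φ (algebraMap ℂ D c) = algebraMap ℂ D ((starRingEnd ℂ) c)) :
    -- (1) ℂ-linear graded automorphisms
    (∀ ψ : D ≃ₐ[ℝ] D, (∀ (g : G), ∀ x ∈ comp g, ψ x ∈ comp g) →
      (∀ c : ℂ, ψ (algebraMap ℂ D c) = algebraMap ℂ D c) →
      ∃ ν : ↥T → ℂˣ, (∀ s t : ↥T, ν (s * t) = ν s * ν t) ∧
        ∀ t : ↥T, ψ (X t : D) = (X t : D) * algebraMap ℂ D (ν t)) ∧
    -- (2) ℂ-antilinear graded automorphisms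
    (∀ ψ : D ≃ₐ[ℝ] D, (∀ (g : G), ∀ x ∈ comp g, ψ x ∈ comp g) →
      (∀ c : ℂ, ψ (algebraMap ℂ D c) = algebraMap ℂ D ((starRingEnd ℂ) c)) →
      (∀ s t : ↥T, β s t = 1 ∨ β s t = -1) ∧
        ∃ ν : ↥T → ℂˣ, (∀ s t : ↥T, (ν (s * t) : ℂ) = (ν s : ℂ) * (ν t : ℂ) * β s t) ∧
          ∀ t : ↥T, ψ (X t : D) = (X t : D) * algebraMap ℂ D (ν t)) ∧
    -- (3) commuting with the involution
    ∀ (ψ : D ≃ₐ[ℝ] D) (ν : ↥T → ℂˣ), (∀ (g : G), ∀ x ∈ comp g, ψ x ∈ comp g) →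
      ((∀ c : ℂ, ψ (algebraMap ℂ D c) = algebraMap ℂ D c) ∨
        (∀ c : ℂ, ψ (algebraMap ℂ D c) = algebraMap ℂ D ((starRingEnd ℂ) c))) →
      (∀ t : ↥T, ψ (X t : D) = (X t : D) * algebraMap ℂ D (ν t)) →
      ((∀ x : D, ψ (φ x) = φ (ψ x)) ↔ ∀ t : ↥T, ((ν t : ℂ)).im = 0) := by

  obtain ⟨hint, hone, hmul, hunit⟩ := hgda
  have hntD : Nontrivial D := by
    obtain ⟨x, hx, hx0⟩ := (Submodule.ne_bot_iff _).mp ((hT 1).mpr T.one_mem)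
    exact ⟨x, 0, hx0⟩
  have hinj : Function.Injective (algebraMap ℂ D) := RingHom.injective _
  have hXinv : ∀ t : ↥T, (((X t)⁻¹ : Dˣ) : D) ∈ comp ((t : G))⁻¹ := by
    intro t
    have hmem : ((X t⁻¹ : Dˣ) : D) * ((X t : Dˣ) : D) ∈
        comp (((t⁻¹ : ↥T) : G) * ((t : ↥T) : G)) := hmul _ _ _ _ (hX t⁻¹) (hX t)
    have h1 : (((t⁻¹ : ↥T) : G) * ((t : ↥T) : G)) = 1 := by
      push_cast; group
    rw [h1] at hmem
    obtain ⟨c, hc⟩ := hDe _ hmem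
    have hc0 : c ≠ 0 := by
      rintro rfl
      rw [map_zero] at hc
      exact (X t⁻¹ * X t).isUnit.ne_zero (by rw [Units.val_mul]; exact hc)
    have key : (algebraMap ℂ D c⁻¹ * ((X t⁻¹ : Dˣ) : D)) * ((X t : Dˣ) : D) = 1 := by
      rw [mul_assoc, hc, ← map_mul, inv_mul_cancel₀ hc0, map_one]
    have h2 : (((X t)⁻¹ : Dˣ) : D) = algebraMap ℂ D c⁻¹ * ((X t⁻¹ : Dˣ) : D) := by
      calc (((X t)⁻¹ : Dˣ) : D) = 1 * (((X t)⁻¹ : Dˣ) : D) := (one_mul _).symm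
        _ = ((algebraMap ℂ D c⁻¹ * ((X t⁻¹ : Dˣ) : D)) * ((X t : Dˣ) : D)) *
            (((X t)⁻¹ : Dˣ) : D) := by rw [key]
        _ = algebraMap ℂ D c⁻¹ * ((X t⁻¹ : Dˣ) : D) := by
            rw [mul_assoc, Units.mul_inv, mul_one]
    rw [h2]
    have := hmul _ _ _ _ (hDe' c⁻¹) (hX t⁻¹)
    have hco : ((t⁻¹ : ↥T) : G) = ((t : ↥T) : G)⁻¹ := by push_cast; ring
    rw [hco, one_mul] at this
    exact this
  have hdec : ∀ (t : ↥T) (y : D), y ∈ comp ((t : ↥T) : G) →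
      ∃ c : ℂ, y = ((X t : Dˣ) : D) * algebraMap ℂ D c := by
    intro t y hy
    have hmem : (((X t)⁻¹ : Dˣ) : D) * y ∈ comp (((t : ↥T) : G)⁻¹ * ((t : ↥T) : G)) :=
      hmul _ _ _ _ (hXinv t) hy
    rw [inv_mul_cancel] at hmem
    obtain ⟨c, hc⟩ := hDe _ hmem
    refine ⟨c, ?_⟩
    have := congrArg (fun z => ((X t : Dˣ) : D) * z) hc
    simpa [Units.mul_inv_cancel_left] using this
  have huniq : ∀ (u : ↥T) {c₁ c₂ : ℂ},
      ((X u : Dˣ) : D) * algebraMap ℂ D c₁ = ((X u : Dˣ) : D) * algebraMap ℂ D c₂ → c₁ = c₂ := by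
    intro u c₁ c₂ h
    apply hinj
    have := congrArg (fun z => (((X u)⁻¹ : Dˣ) : D) * z) h
    simpa [← mul_assoc, Units.inv_mul] using this
  have hsig : ∀ s t : ↥T, ∃ c : ℂ,
      ((X s : Dˣ) : D) * ((X t : Dˣ) : D) = ((X (s*t) : Dˣ) : D) * algebraMap ℂ D c := by
    intro s t
    apply hdec
    have := hmul _ _ _ _ (hX s) (hX t)
    simpa using this
  choose σ hσ using hsig
  have hσ0 : ∀ s t : ↥T, σ s t ≠ 0 := by
    intro s t h
    have h2 := hσ s t
    rw [h, map_zero, mul_zero] at h2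
    exact (X s * X t).isUnit.ne_zero (by rw [Units.val_mul]; exact h2)
  have hφalg : ∀ (t : ↥T) (c : ℂ), φ (((X t : Dˣ) : D) * algebraMap ℂ D c) =
      ((X t : Dˣ) : D) * algebraMap ℂ D ((starRingEnd ℂ) c) := by
    intro t c
    rw [hanti, hφC, hφX, Algebra.commutes]
  have hσconj : ∀ s t : ↥T, (starRingEnd ℂ) (σ s t) = σ t s := by
    intro s t
    apply huniq (t * s)
    calc ((X (t*s) : Dˣ) : D) * algebraMap ℂ D ((starRingEnd ℂ) (σ s t))
        = ((X (s*t) : Dˣ) : D) * algebraMap ℂ D ((starRingEnd ℂ) (σ s t)) := by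
          rw [mul_comm t s]
      _ = φ (((X (s*t) : Dˣ) : D) * algebraMap ℂ D (σ s t)) := (hφalg _ _).symm
      _ = φ (((X s : Dˣ) : D) * ((X t : Dˣ) : D)) := by rw [← hσ]
      _ = ((X t : Dˣ) : D) * ((X s : Dˣ) : D) := by rw [hanti, hφX, hφX]
      _ = ((X (t*s) : Dˣ) : D) * algebraMap ℂ D (σ t s) := hσ t s
  have hβσ : ∀ s t : ↥T, σ s t = σ t s * β s t := by
    intro s t
    apply huniq (s*t)
    calc ((X (s*t) : Dˣ) : D) * algebraMap ℂ D (σ s t)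
        = ((X s : Dˣ) : D) * ((X t : Dˣ) : D) := (hσ s t).symm
      _ = algebraMap ℂ D (β s t) * (((X t : Dˣ) : D) * ((X s : Dˣ) : D)) := hβdef s t
      _ = (((X t : Dˣ) : D) * ((X s : Dˣ) : D)) * algebraMap ℂ D (β s t) :=
          Algebra.commutes _ _
      _ = (((X (t*s) : Dˣ) : D) * algebraMap ℂ D (σ t s)) * algebraMap ℂ D (β s t) := by
          rw [hσ t s]
      _ = ((X (s*t) : Dˣ) : D) * algebraMap ℂ D (σ t s * β s t) := by
          rw [mul_comm t s, mul_assoc, ← map_mul]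
  have hswap : ∀ (x y : D) (a b : ℂ), (x * algebraMap ℂ D a) * (y * algebraMap ℂ D b) =
      (x * y) * algebraMap ℂ D (a * b) := by
    intro x y a b
    calc (x * algebraMap ℂ D a) * (y * algebraMap ℂ D b)
        = x * ((algebraMap ℂ D a * y) * algebraMap ℂ D b) := by rw [mul_assoc, mul_assoc]
      _ = x * ((y * algebraMap ℂ D a) * algebraMap ℂ D b) := by rw [Algebra.commutes]
      _ = (x * y) * algebraMap ℂ D (a * b) := by rw [map_mul (algebraMap ℂ D), mul_assoc, mul_assoc]
  have hpsiX : ∀ (ψ : D ≃ₐ[ℝ] D), (∀ (g : G), ∀ x ∈ comp g, ψ x ∈ comp g) →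
      ∃ ν : ↥T → ℂˣ, ∀ t : ↥T, ψ ((X t : Dˣ) : D) =
        ((X t : Dˣ) : D) * algebraMap ℂ D (ν t) := by
    intro ψ hgr
    have h : ∀ t : ↥T, ∃ c : ℂˣ, ψ ((X t : Dˣ) : D) =
        ((X t : Dˣ) : D) * algebraMap ℂ D (c : ℂ) := by
      intro t
      obtain ⟨c, hc⟩ := hdec t _ (hgr _ _ (hX t))
      have hc0 : c ≠ 0 := by
        rintro rfl
        rw [map_zero, mul_zero] at hc
        exact ((X t).isUnit.map ψ).ne_zero hc
      exact ⟨Units.mk0 c hc0, hc⟩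
    choose ν hν using h
    exact ⟨ν, hν⟩
  -- key multiplicative relation for each case
  have hkey : ∀ (ψ : D ≃ₐ[ℝ] D) (ν : ↥T → ℂˣ) (f : ℂ → ℂ),
      (∀ c : ℂ, ψ (algebraMap ℂ D c) = algebraMap ℂ D (f c)) →
      (∀ t : ↥T, ψ ((X t : Dˣ) : D) = ((X t : Dˣ) : D) * algebraMap ℂ D (ν t)) →
      ∀ s t : ↥T, ((ν (s*t) : ℂ)) * f (σ s t) = σ s t * ((ν s : ℂ) * (ν t : ℂ)) := by
    intro ψ ν f hf hν s t
    apply huniq (s*t)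
    calc ((X (s*t) : Dˣ) : D) * algebraMap ℂ D ((ν (s*t) : ℂ) * f (σ s t))
        = (((X (s*t) : Dˣ) : D) * algebraMap ℂ D (ν (s*t) : ℂ)) * algebraMap ℂ D (f (σ s t)) := by
          rw [map_mul, mul_assoc]
      _ = ψ ((X (s*t) : Dˣ) : D) * ψ (algebraMap ℂ D (σ s t)) := by rw [hν, hf]
      _ = ψ (((X (s*t) : Dˣ) : D) * algebraMap ℂ D (σ s t)) := (map_mul ψ _ _).symm
      _ = ψ (((X s : Dˣ) : D) * ((X t : Dˣ) : D)) := by rw [← hσ]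
      _ = ψ ((X s : Dˣ) : D) * ψ ((X t : Dˣ) : D) := map_mul ψ _ _
      _ = (((X s : Dˣ) : D) * algebraMap ℂ D (ν s : ℂ)) *
          (((X t : Dˣ) : D) * algebraMap ℂ D (ν t : ℂ)) := by rw [hν, hν]
      _ = (((X s : Dˣ) : D) * ((X t : Dˣ) : D)) * algebraMap ℂ D ((ν s : ℂ) * (ν t : ℂ)) :=
          hswap _ _ _ _
      _ = (((X (s*t) : Dˣ) : D) * algebraMap ℂ D (σ s t)) *
          algebraMap ℂ D ((ν s : ℂ) * (ν t : ℂ)) := by rw [hσ]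
      _ = ((X (s*t) : Dˣ) : D) * algebraMap ℂ D (σ s t * ((ν s : ℂ) * (ν t : ℂ))) := by
          simp only [map_mul, mul_assoc]
  refine ⟨?_, ?_, ?_⟩
  · -- (1)
    intro ψ hgr hψC
    obtain ⟨ν, hν⟩ := hpsiX ψ hgr
    refine ⟨ν, ?_, hν⟩
    intro s t
    have k := hkey ψ ν id hψC hν s t
    simp only [id_eq] at k
    apply Units.ext
    rw [Units.val_mul]
    exact mul_right_cancel₀ (hσ0 s t) (by simpa using (by linear_combination k : ((ν (s*t) : ℂ)) * σ s t = ((ν s : ℂ) * (ν t : ℂ)) * σ s t))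
  · -- (2)
    intro ψ hgr hψC
    obtain ⟨ν, hν⟩ := hpsiX ψ hgr
    have hrel : ∀ s t : ↥T, ((ν (s*t) : ℂ)) = (ν s : ℂ) * (ν t : ℂ) * β s t := by
      intro s t
      have k := hkey ψ ν (starRingEnd ℂ) hψC hν s t
      rw [hσconj, hβσ s t] at k
      exact mul_right_cancel₀ (hσ0 t s) (by linear_combination k)
    have hpm : ∀ s t : ↥T, β s t = 1 ∨ β s t = -1 := by
      intro s t
      have h1 := hrel s t
      have h2 := hrel t s
      rw [mul_comm t s] at h2
      have hνne : ((ν s : ℂ)) * (ν t : ℂ) ≠ 0 := mul_ne_zero (ν s).ne_zero (ν t).ne_zero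
      have hβeq : β s t = β t s := by
        apply mul_left_cancel₀ hνne
        linear_combination h2 - h1
      have hβinv : β t s * β s t = 1 := by
        have hs1 := hβσ s t
        have hs2 := hβσ t s
        have h3 : σ s t * 1 = σ s t * (β t s * β s t) := by
          calc σ s t * 1 = σ t s * β s t := by rw [mul_one]; exact hs1
            _ = (σ s t * β t s) * β s t := by rw [hs2]
            _ = σ s t * (β t s * β s t) := by ring
        exact (mul_left_cancel₀ (hσ0 s t) h3).symm
      have hsq : β s t * β s t = 1 := by rw [hβeq] at hβinv ⊢; exact hβinv
      have : (β s t - 1) * (β s t + 1) = 0 := by linear_combination hsq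
      rcases mul_eq_zero.mp this with h' | h'
      · exact Or.inl (by linear_combination h')
      · exact Or.inr (by linear_combination h')
    exact ⟨hpm, ν, hrel, hν⟩
  · -- (3)
    intro ψ ν hgr hcase hνX
    constructor
    · intro hcomm t
      have h1 : ψ (φ ((X t : Dˣ) : D)) = ((X t : Dˣ) : D) * algebraMap ℂ D (ν t : ℂ) := by
        rw [hφX, hνX]
      have h2 : φ (ψ ((X t : Dˣ) : D)) =
          ((X t : Dˣ) : D) * algebraMap ℂ D ((starRingEnd ℂ) (ν t : ℂ)) := by
        rw [hνX, hφalg]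
      have h3 : ((ν t : ℂ)) = (starRingEnd ℂ) (ν t : ℂ) :=
        huniq t (by rw [← h1, hcomm, h2])
      exact Complex.conj_eq_iff_im.mp h3.symm
    · intro hre x
      have hν' : ∀ t : ↥T, (starRingEnd ℂ) ((ν t : ℂ)) = (ν t : ℂ) := fun t =>
        Complex.conj_eq_iff_im.mpr (hre t)
      have hcompcase : ∀ (g : G), ∀ y ∈ comp g, ψ (φ y) = φ (ψ y) := by
        intro g y hy
        by_cases hg : g ∈ T
        · obtain ⟨c, rfl⟩ := hdec ⟨g, hg⟩ y hy
          set t : ↥T := ⟨g, hg⟩ with ht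
          rcases hcase with hL | hA
          · calc ψ (φ (((X t : Dˣ) : D) * algebraMap ℂ D c))
                = ψ (((X t : Dˣ) : D) * algebraMap ℂ D ((starRingEnd ℂ) c)) := by rw [hφalg]
              _ = (((X t : Dˣ) : D) * algebraMap ℂ D (ν t : ℂ)) *
                  algebraMap ℂ D ((starRingEnd ℂ) c) := by rw [map_mul, hνX, hL]
              _ = ((X t : Dˣ) : D) * algebraMap ℂ D ((ν t : ℂ) * (starRingEnd ℂ) c) := by
                  rw [map_mul, mul_assoc]
              _ = ((X t : Dˣ) : D) * algebraMap ℂ D ((starRingEnd ℂ) ((ν t : ℂ) * c)) := by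
                  rw [map_mul (starRingEnd ℂ), hν']
              _ = φ (((X t : Dˣ) : D) * algebraMap ℂ D ((ν t : ℂ) * c)) := (hφalg _ _).symm
              _ = φ ((((X t : Dˣ) : D) * algebraMap ℂ D (ν t : ℂ)) * algebraMap ℂ D c) := by
                  rw [map_mul (algebraMap ℂ D), mul_assoc]
              _ = φ (ψ ((X t : Dˣ) : D) * ψ (algebraMap ℂ D c)) := by rw [hνX, hL]
              _ = φ (ψ (((X t : Dˣ) : D) * algebraMap ℂ D c)) := by rw [← map_mul ψ]
          · calc ψ (φ (((X t : Dˣ) : D) * algebraMap ℂ D c))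
                = ψ (((X t : Dˣ) : D) * algebraMap ℂ D ((starRingEnd ℂ) c)) := by rw [hφalg]
              _ = (((X t : Dˣ) : D) * algebraMap ℂ D (ν t : ℂ)) *
                  algebraMap ℂ D ((starRingEnd ℂ) ((starRingEnd ℂ) c)) := by
                  rw [map_mul, hνX, hA]
              _ = ((X t : Dˣ) : D) * algebraMap ℂ D ((ν t : ℂ) * c) := by
                  rw [Complex.conj_conj, map_mul, mul_assoc]
              _ = ((X t : Dˣ) : D) *
                  algebraMap ℂ D ((starRingEnd ℂ) ((ν t : ℂ) * (starRingEnd ℂ) c)) := by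
                  rw [map_mul (starRingEnd ℂ), hν', Complex.conj_conj]
              _ = φ (((X t : Dˣ) : D) * algebraMap ℂ D ((ν t : ℂ) * (starRingEnd ℂ) c)) :=
                  (hφalg _ _).symm
              _ = φ ((((X t : Dˣ) : D) * algebraMap ℂ D (ν t : ℂ)) *
                  algebraMap ℂ D ((starRingEnd ℂ) c)) := by
                  rw [map_mul (algebraMap ℂ D), mul_assoc]
              _ = φ (ψ ((X t : Dˣ) : D) * ψ (algebraMap ℂ D c)) := by rw [hνX, hA]
              _ = φ (ψ (((X t : Dˣ) : D) * algebraMap ℂ D c)) := by rw [← map_mul ψ]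
        · have hbot : comp g = ⊥ := by
            by_contra h
            exact hg ((hT g).mp h)
          rw [hbot, Submodule.mem_bot] at hy
          subst hy
          simp
      have htop : x ∈ ⨆ g, comp g := by
        rw [hint.submodule_iSup_eq_top]; trivial
      refine Submodule.iSup_induction (motive := fun x => ψ (φ x) = φ (ψ x)) _ htop hcompcase
        (by simp) ?_
      intro a b ha hb
      simp only [map_add, ha, hb]
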